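/- arXiv:0907.2609 — 2 statements merged into one kernel-verified Lean document; each statement's English description precedes it below -/
import Mathlib

section
/- Let d ≥ 2 and let g : ℕ → ℝ_{>0} be nondecreasing, and let (n_k)_{k≥0} be a strictly increasing sequence of positive integers with n_{k+1} ≤ n_k + g(n_k) for all k. If Σ_{n ≥ n_0} g(n)^{-d/(d-1)} = ∞, then Σ_{k≥0} g(n_k)^{-1/(d-1)} = ∞. -/
/-- the series comparison used in the isoperimetric criterion: if
`Σ_{n ≥ n_0} g(n)^{-d/(d-1)} = ∞` and `n_{k+1} ≤ n_k + g(n_k)`, then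
`Σ_k g(n_k)^{-1/(d-1)} = ∞`. -/
theorem series_comparison (d : ℕ) (hd : 2 ≤ d) (g : ℕ → ℝ) (hgpos : ∀ n, 0 < g n)
    (hgmono : Monotone g) (n : ℕ → ℕ) (hmono : StrictMono n) (hpos : ∀ k, 0 < n k)
    (hrec : ∀ k, ((n (k + 1) : ℝ)) ≤ (n k : ℝ) + g (n k))
    (hdiv : ¬ Summable (fun j : ℕ => g (n 0 + j) ^ (-(d : ℝ) / ((d : ℝ) - 1)))) :
    ¬ Summable (fun k : ℕ => g (n k) ^ (-(1 : ℝ) / ((d : ℝ) - 1))) := by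
  intro hsum
  apply hdiv
  set p : ℝ := -(d : ℝ) / ((d : ℝ) - 1) with hp
  set q : ℝ := -(1 : ℝ) / ((d : ℝ) - 1) with hq
  have hd1 : (1:ℝ) ≤ (d:ℝ) - 1 := by
    have : (2:ℝ) ≤ (d:ℝ) := by exact_mod_cast hd
    linarith
  have hdne : (d:ℝ) - 1 ≠ 0 := by linarith
  have hple : p ≤ 0 := by
    apply div_nonpos_of_nonpos_of_nonneg
    · exact neg_nonpos.mpr (Nat.cast_nonneg d)
    · linarith
  have hpq : (1:ℝ) + p = q := by
    rw [hp, hq]; field_simp; ring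
  have key : ∀ K, ∑ m ∈ Finset.Ico (n 0) (n K), g m ^ p ≤
      ∑ k ∈ Finset.range K, g (n k) ^ q := by
    intro K
    induction K with
    | zero => simp
    | succ K ih =>
      rw [Finset.range_add_one, Finset.sum_insert Finset.notMem_range_self,
        ← Finset.sum_Ico_consecutive _ (hmono.monotone (Nat.zero_le K))
          (hmono (Nat.lt_succ_self K)).le]
      have hblock : ∑ m ∈ Finset.Ico (n K) (n (K+1)), g m ^ p ≤ g (n K) ^ q := by
        calc ∑ m ∈ Finset.Ico (n K) (n (K+1)), g m ^ p
            ≤ ∑ _m ∈ Finset.Ico (n K) (n (K+1)), g (n K) ^ p := by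
              refine Finset.sum_le_sum fun m hm => ?_
              exact Real.rpow_le_rpow_of_nonpos (hgpos (n K))
                (hgmono (Finset.mem_Ico.mp hm).1) hple
          _ = ((n (K+1) - n K : ℕ) : ℝ) * g (n K) ^ p := by
              rw [Finset.sum_const, Nat.card_Ico, nsmul_eq_mul]
          _ ≤ g (n K) * g (n K) ^ p := by
              apply mul_le_mul_of_nonneg_right _ (Real.rpow_nonneg (hgpos _).le _)
              rw [Nat.cast_sub (hmono (Nat.lt_succ_self K)).le]
              linarith [hrec K]
          _ = g (n K) ^ q := by
              rw [← hpq, Real.rpow_add (hgpos _), Real.rpow_one]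
      linarith
  have hN : ∀ N, n 0 + N ≤ n N := by
    intro N
    induction N with
    | zero => simp
    | succ N ih =>
      have : n N < n (N+1) := hmono (by omega)
      omega
  refine summable_of_sum_range_le (c := ∑' k, g (n k) ^ q)
    (fun j => Real.rpow_nonneg (hgpos _).le _) fun N => ?_
  calc ∑ j ∈ Finset.range N, g (n 0 + j) ^ p
      = ∑ m ∈ Finset.Ico (n 0) (n 0 + N), g m ^ p := by
        rw [Finset.sum_Ico_eq_sum_range]; simp
    _ ≤ ∑ m ∈ Finset.Ico (n 0) (n N), g m ^ p :=
        Finset.sum_le_sum_of_subset_of_nonneg (Finset.Ico_subset_Ico_right (hN N))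
          (fun _ _ _ => Real.rpow_nonneg (hgpos _).le _)
    _ ≤ ∑ k ∈ Finset.range N, g (n k) ^ q := key N
    _ ≤ ∑' k, g (n k) ^ q :=
        Summable.sum_le_tsum _ (fun _ _ => Real.rpow_nonneg (hgpos _).le _) hsum
end

section
/- Let P_n be a sequence of sphere packings in ℝ^d, each containing the closed unit ball B(0,1), and suppose that every ball of P_n tangent to B(0,1) has radius in [1/M, M]. Suppose the closures of the unions ∪P_n converge in the local Hausdorff topology to a closed set P. Then P contains the unit sphere, and any sphere in P arising as a limit of spheres tangent to the unit ball has radius in [1/M, M] and is tangent to the unit sphere. -/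
open Metric Filter

/-- Two closed balls are tangent: they intersect in exactly one point. -/
def TangentBalls {d : ℕ} (c₁ : EuclideanSpace ℝ (Fin d)) (r₁ : ℝ)
    (c₂ : EuclideanSpace ℝ (Fin d)) (r₂ : ℝ) : Prop :=
  ∃ p, closedBall c₁ r₁ ∩ closedBall c₂ r₂ = {p}

lemma tangent_of_dist {d : ℕ} (c₁ c₂ : EuclideanSpace ℝ (Fin d)) (r₁ r₂ : ℝ)
    (h₁ : 0 < r₁) (h₂ : 0 < r₂) (h : dist c₁ c₂ = r₁ + r₂) :
    TangentBalls c₁ r₁ c₂ r₂ := by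
  have hs : (0:ℝ) < r₁ + r₂ := by linarith
  set q := c₁ + (r₁ / (r₁ + r₂)) • (c₂ - c₁) with hq
  have hnorm : ‖c₂ - c₁‖ = r₁ + r₂ := by rw [← dist_eq_norm, dist_comm]; exact h
  refine ⟨q, ?_⟩
  ext x
  simp only [Set.mem_inter_iff, mem_closedBall, Set.mem_singleton_iff]
  constructor
  · rintro ⟨hx1, hx2⟩
    have e1 : ‖x - c₁‖ ≤ r₁ := by rwa [← dist_eq_norm]
    have e2 : ‖c₂ - x‖ ≤ r₂ := by rw [← dist_eq_norm, dist_comm]; exact hx2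
    have key : ‖(x - c₁) + (c₂ - x)‖ = r₁ + r₂ := by
      rw [show (x - c₁) + (c₂ - x) = c₂ - c₁ by abel, hnorm]
    have hle := norm_add_le (x - c₁) (c₂ - x)
    have e1' : ‖x - c₁‖ = r₁ := by linarith [e1.lt_or_eq.resolve_left (fun hh => by linarith : ¬ ‖x - c₁‖ < r₁)]
    have e2' : ‖c₂ - x‖ = r₂ := by linarith
    have hsr : SameRay ℝ (x - c₁) (c₂ - x) := by
      rw [sameRay_iff_norm_add, key, e1', e2']
    have hx0 : x - c₁ ≠ 0 := by
      intro hh; rw [hh, norm_zero] at e1'; linarith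
    have hc0 : c₂ - x ≠ 0 := by
      intro hh; rw [hh, norm_zero] at e2'; linarith
    obtain ⟨a, b, ha, hb, hab⟩ := hsr.exists_pos hx0 hc0
    have hn : a * r₁ = b * r₂ := by
      have := congrArg norm hab
      rwa [norm_smul, norm_smul, Real.norm_eq_abs, Real.norm_eq_abs,
        abs_of_pos ha, abs_of_pos hb, e1', e2'] at this
    have hx : r₂ • (x - c₁) = r₁ • (c₂ - x) := by
      have h3 := congrArg (fun v => (a⁻¹ * r₂) • v) hab
      simp only [smul_smul] at h3
      rw [show a⁻¹ * r₂ * a = r₂ by field_simp,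
        show a⁻¹ * r₂ * b = r₁ by field_simp; nlinarith [hn]] at h3
      exact h3
    have hxq : (r₁ + r₂) • x = (r₁ + r₂) • q := by
      rw [hq]
      have : (r₁ + r₂) • (c₁ + (r₁ / (r₁ + r₂)) • (c₂ - c₁))
          = (r₁ + r₂) • c₁ + r₁ • (c₂ - c₁) := by
        rw [smul_add, smul_smul, show (r₁ + r₂) * (r₁ / (r₁ + r₂)) = r₁ by field_simp]
      rw [this]
      have := hx
      rw [smul_sub, smul_sub, sub_eq_iff_eq_add] at this
      rw [add_smul, this]
      module
    exact smul_right_injective _ (ne_of_gt hs) hxq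
  · rintro rfl
    constructor
    · rw [dist_eq_norm, hq, show c₁ + (r₁ / (r₁ + r₂)) • (c₂ - c₁) - c₁ = (r₁ / (r₁ + r₂)) • (c₂ - c₁) by abel,
        norm_smul, Real.norm_eq_abs, abs_of_pos (by positivity), hnorm, div_mul_cancel₀ _ (ne_of_gt hs)]
    · rw [dist_eq_norm, hq, show c₁ + (r₁ / (r₁ + r₂)) • (c₂ - c₁) - c₂ = (r₁ / (r₁ + r₂) - 1) • (c₂ - c₁) by module,
        norm_smul, Real.norm_eq_abs, hnorm]
      rw [show r₁ / (r₁ + r₂) - 1 = -(r₂ / (r₁ + r₂)) by field_simp; ring]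
      rw [abs_neg, abs_of_pos (by positivity), div_mul_cancel₀ _ (ne_of_gt hs)]

lemma dist_of_tangent {d : ℕ} (hd : 1 ≤ d) (c₁ c₂ : EuclideanSpace ℝ (Fin d)) (r₁ r₂ : ℝ)
    (h₁ : 0 < r₁) (h₂ : 0 < r₂) (h : TangentBalls c₁ r₁ c₂ r₂) :
    dist c₁ c₂ = r₁ + r₂ := by
  haveI : Nonempty (Fin d) := ⟨⟨0, hd⟩⟩
  haveI : Nontrivial (EuclideanSpace ℝ (Fin d)) := inferInstance
  obtain ⟨p, hp⟩ := h
  have hpmem : p ∈ closedBall c₁ r₁ ∩ closedBall c₂ r₂ := hp ▸ rfl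
  have hle : dist c₁ c₂ ≤ r₁ + r₂ :=
    (dist_triangle c₁ p c₂).trans (add_le_add (dist_comm c₁ p ▸ hpmem.1) hpmem.2)
  rcases hle.lt_or_eq with hlt | heq
  · exfalso
    set D := dist c₁ c₂ with hD
    -- find q in the open intersection
    obtain ⟨q, hq1, hq2⟩ : ∃ q, q ∈ ball c₁ r₁ ∧ q ∈ ball c₂ r₂ := by
      rcases lt_or_ge D r₂ with hcase | hcase
      · exact ⟨c₁, mem_ball_self h₁, by rw [mem_ball]; exact hcase⟩
      · have hD0 : 0 < D := lt_of_lt_of_le h₂ hcase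
        set t := (D - r₂ + min D r₁) / 2 with ht
        have h5 : D - r₂ < min D r₁ := lt_min (by linarith) (by linarith)
        have ht1 : D - r₂ < t := by rw [ht]; linarith
        have ht2 : t < min D r₁ := by rw [ht]; linarith
        have ht3 : 0 < t := lt_of_le_of_lt (by linarith) ht1
        have htD : t < D := lt_of_lt_of_le ht2 (min_le_left _ _)
        have htr : t < r₁ := lt_of_lt_of_le ht2 (min_le_right _ _)
        refine ⟨c₁ + (t / D) • (c₂ - c₁), ?_, ?_⟩
        · rw [mem_ball, dist_eq_norm, show c₁ + (t / D) • (c₂ - c₁) - c₁ = (t / D) • (c₂ - c₁) by abel,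
            norm_smul, Real.norm_eq_abs, abs_of_pos (by positivity),
            show ‖c₂ - c₁‖ = D by rw [← dist_eq_norm, dist_comm],
            div_mul_cancel₀ _ (ne_of_gt hD0)]
          exact htr
        · rw [mem_ball, dist_eq_norm,
            show c₁ + (t / D) • (c₂ - c₁) - c₂ = (t / D - 1) • (c₂ - c₁) by module,
            norm_smul, Real.norm_eq_abs,
            show ‖c₂ - c₁‖ = D by rw [← dist_eq_norm, dist_comm],
            show t / D - 1 = -((D - t) / D) by field_simp; ring,
            abs_neg, abs_of_pos (div_pos (by linarith) hD0), div_mul_cancel₀ _ (ne_of_gt hD0)]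
          linarith
    obtain ⟨ε, hε, hball⟩ := (Metric.isOpen_iff.mp (isOpen_ball.inter isOpen_ball)) q ⟨hq1, hq2⟩
    obtain ⟨y, hy⟩ := exists_ne q
    have hy0 : y - q ≠ 0 := sub_ne_zero_of_ne hy
    have hny : 0 < ‖y - q‖ := norm_pos_iff.mpr hy0
    have hcpos : 0 < ε / (2 * ‖y - q‖) := div_pos hε (mul_pos two_pos hny)
    set q' := q + (ε / (2 * ‖y - q‖)) • (y - q) with hq'
    have hd' : dist q' q = ε / 2 := by
      rw [hq', dist_eq_norm, add_sub_cancel_left, norm_smul, Real.norm_eq_abs,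
        abs_of_pos hcpos]
      field_simp [hny.ne']
    have hq'mem : q' ∈ ball q ε := by rw [mem_ball, hd']; linarith
    have hqmem : q ∈ ball q ε := mem_ball_self hε
    have m1 : q ∈ closedBall c₁ r₁ ∩ closedBall c₂ r₂ :=
      ⟨ball_subset_closedBall (hball hqmem).1, ball_subset_closedBall (hball hqmem).2⟩
    have m2 : q' ∈ closedBall c₁ r₁ ∩ closedBall c₂ r₂ :=
      ⟨ball_subset_closedBall (hball hq'mem).1, ball_subset_closedBall (hball hq'mem).2⟩
    rw [hp, Set.mem_singleton_iff] at m1 m2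
    have : q' = q := m2.trans m1.symm
    rw [hq', add_eq_left] at this
    rcases smul_eq_zero.mp this with h' | h'
    · exact hcpos.ne' h'
    · exact hy0 h'
  · exact heq

/-- limits of sphere packings containing the unit ball, whose balls
tangent to the unit ball have radii in [1/M, M]: the limit set contains the unit
sphere, and any limit of spheres tangent to the unit ball has radius in [1/M, M]
and is tangent to the unit sphere. -/
theorem packing_limit (d : ℕ) (hd : 2 ≤ d) (M : ℝ) (hM : 1 ≤ M)
    (ι : ℕ → Type) (C : ∀ n, ι n → EuclideanSpace ℝ (Fin d)) (ρ : ∀ n, ι n → ℝ)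
    (hρ : ∀ n i, 0 < ρ n i)
    (hdisj : ∀ n, Pairwise fun i j : ι n =>
      Disjoint (ball (C n i) (ρ n i)) (ball (C n j) (ρ n j)))
    (hunit : ∀ n, ∃ i : ι n, C n i = 0 ∧ ρ n i = 1)
    (hrad : ∀ n (i : ι n), TangentBalls (C n i) (ρ n i) (0 : EuclideanSpace ℝ (Fin d)) 1 →
      ρ n i ∈ Set.Icc (1 / M) M)
    (S : ℕ → Set (EuclideanSpace ℝ (Fin d)))
    (hS : ∀ n, S n = ⋃ i : ι n, sphere (C n i) (ρ n i))
    (P : Set (EuclideanSpace ℝ (Fin d))) (hP : IsClosed P)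
    -- local Hausdorff convergence of the packings (expressed in Kuratowski form):
    (hupper : ∀ (x : EuclideanSpace ℝ (Fin d)) (xs : ℕ → EuclideanSpace ℝ (Fin d)),
      (∀ n, xs n ∈ S n) → Tendsto xs atTop (nhds x) → x ∈ P)
    (hlower : ∀ x ∈ P, ∃ xs : ℕ → EuclideanSpace ℝ (Fin d),
      (∀ n, xs n ∈ S n) ∧ Tendsto xs atTop (nhds x)) :
    sphere (0 : EuclideanSpace ℝ (Fin d)) 1 ⊆ P ∧
      ∀ (c : EuclideanSpace ℝ (Fin d)) (r : ℝ)
        (cs : ℕ → EuclideanSpace ℝ (Fin d)) (rs : ℕ → ℝ),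
        (∀ n, ∃ i : ι n, C n i = cs n ∧ ρ n i = rs n ∧
          TangentBalls (C n i) (ρ n i) (0 : EuclideanSpace ℝ (Fin d)) 1) →
        Tendsto cs atTop (nhds c) → Tendsto rs atTop (nhds r) →
        r ∈ Set.Icc (1 / M) M ∧
          TangentBalls c r (0 : EuclideanSpace ℝ (Fin d)) 1 ∧
          sphere c r ⊆ P := by
  have hd1 : 1 ≤ d := le_trans one_le_two hd
  constructor
  · intro x hx
    refine hupper x (fun _ => x) (fun n => ?_) tendsto_const_nhds
    obtain ⟨i, hC, hρ'⟩ := hunit n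
    rw [hS n]
    exact Set.mem_iUnion.mpr ⟨i, by rw [hC, hρ']; exact hx⟩
  · intro c r cs rs hseq hc hr
    have hMpos : (0:ℝ) < M := lt_of_lt_of_le one_pos hM
    have h1M : (0:ℝ) < 1 / M := by positivity
    have hrs : ∀ n, rs n ∈ Set.Icc (1 / M) M := by
      intro n
      obtain ⟨i, hC, hρ', htan⟩ := hseq n
      rw [← hρ']
      exact hrad n i htan
    have hrIcc : r ∈ Set.Icc (1 / M) M :=
      ⟨ge_of_tendsto hr (Eventually.of_forall fun n => (hrs n).1),
       le_of_tendsto hr (Eventually.of_forall fun n => (hrs n).2)⟩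
    have hrpos : 0 < r := lt_of_lt_of_le h1M hrIcc.1
    have hdist : ∀ n, dist (cs n) 0 = rs n + 1 := by
      intro n
      obtain ⟨i, hC, hρ', htan⟩ := hseq n
      rw [← hC, ← hρ']
      exact dist_of_tangent hd1 _ _ _ _ (hρ n i) one_pos htan
    have hdc : dist c 0 = r + 1 := by
      have t1 : Tendsto (fun n => dist (cs n) 0) atTop (nhds (dist c 0)) :=
        hc.dist tendsto_const_nhds
      have t2 : Tendsto (fun n => rs n + 1) atTop (nhds (r + 1)) :=
        hr.add tendsto_const_nhds
      simp_rw [hdist] at t1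
      exact tendsto_nhds_unique t1 t2
    refine ⟨hrIcc, tangent_of_dist _ _ _ _ hrpos one_pos hdc, ?_⟩
    intro x hx
    have hxn : ‖x - c‖ = r := mem_sphere_iff_norm.mp hx
    refine hupper x (fun n => cs n + (rs n / r) • (x - c)) (fun n => ?_) ?_
    · obtain ⟨i, hC, hρ', htan⟩ := hseq n
      rw [hS n]
      refine Set.mem_iUnion.mpr ⟨i, ?_⟩
      rw [mem_sphere_iff_norm, hC, hρ', add_sub_cancel_left, norm_smul, Real.norm_eq_abs,
        abs_of_pos (div_pos (hρ' ▸ hρ n i) hrpos), hxn, div_mul_cancel₀ _ hrpos.ne']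
    · have t : Tendsto (fun n => cs n + (rs n / r) • (x - c)) atTop
        (nhds (c + (r / r) • (x - c))) :=
        hc.add ((hr.div_const r).smul_const (x - c))
      have hxeq : c + (r / r) • (x - c) = x := by
        rw [div_self hrpos.ne', one_smul]; abel
      rw [hxeq] at t
      exact t
end
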